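/- Let $g$ be a finite connected graph with edge set $E(g)$. For a spanning tree $T$ of $g$ and $s \in [0,1]^{E(T)}$, define for any edge $\ell = \{i,j\} \in E(g)$ the value $s^T(\ell) = \min\{s(\ell') : \ell' \text{ on the unique } T\text{-path joining } i \text{ and } j\}$. Then $\sum_{T \text{ spanning tree of } g} \int_{[0,1]^{E(T)}} \prod_{\ell \in E(g) \setminus E(T)} s^T(\ell) \, \prod_{\ell \in E(T)} ds(\ell) = 1$. -/

import Mathlib

open scoped Classical
open MeasureTheory

/-- For a tree `T` on `V` with edge weights `s`, `treeMin T hT s e` is the minimum of `s`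
over the edges of the unique `T`-path joining the two endpoints of the pair `e`
(with the convention that the minimum also includes the value `1`). -/
noncomputable def treeMin {V : Type*} (T : SimpleGraph V) (hT : T.IsTree)
    (s : Sym2 V → ℝ) (e : Sym2 V) : ℝ :=
  (((hT.existsUnique_path e.out.1 e.out.2).exists.choose).edges.map s).foldr min 1

namespace BKAux
variable {V : Type*}


lemma connected_of_adj_reachable {G H : SimpleGraph V} (hG : G.Connected)
    (h : ∀ a b : V, G.Adj a b → H.Reachable a b) : H.Connected := by
  have key : ∀ a b : V, G.Reachable a b → H.Reachable a b := by
    intro a b hr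
    obtain ⟨w⟩ := hr
    induction w with
    | nil => exact SimpleGraph.Reachable.refl _
    | cons h' p ih => exact (h _ _ h').trans ih
  haveI := hG.nonempty
  exact SimpleGraph.Connected.mk fun a b => key a b (hG.preconnected a b)

lemma connected_delete_cycle_edge {G : SimpleGraph V} (hG : G.Connected) {u : V}
    {c : G.Walk u u} (hc : c.IsCycle) {e : Sym2 V} (he : e ∈ c.edges) :
    (G \ SimpleGraph.fromEdgeSet {e}).Connected := by
  induction e with
  | _ v w =>
    have hadj : G.Adj v w := c.adj_of_mem_edges he
    have hr : (G \ SimpleGraph.fromEdgeSet {s(v, w)}).Reachable v w :=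
      (SimpleGraph.adj_and_reachable_delete_edges_iff_exists_cycle.2 ⟨u, c, hc, he⟩).2
    refine connected_of_adj_reachable hG fun a b hab => ?_
    by_cases hee : s(a, b) = s(v, w)
    · rw [Sym2.eq_iff] at hee
      rcases hee with ⟨rfl, rfl⟩ | ⟨rfl, rfl⟩
      · exact hr
      · exact hr.symm
    · exact SimpleGraph.Adj.reachable (by
        simp only [SimpleGraph.sdiff_adj, SimpleGraph.fromEdgeSet_adj, Set.mem_singleton_iff]
        exact ⟨hab, fun h => hee h.1⟩)

lemma edgeSet_delete_edge (G : SimpleGraph V) (e : Sym2 V) :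
    (G \ SimpleGraph.fromEdgeSet {e}).edgeSet = G.edgeSet \ {e} := by
  simp [SimpleGraph.edgeSet_sdiff, SimpleGraph.edgeSet_fromEdgeSet,
    SimpleGraph.edgeSet_sdiff_sdiff_isDiag]

lemma cycle_edges_ne_nil {G : SimpleGraph V} {u : V} {c : G.Walk u u} (hc : c.IsCycle) :
    c.edges ≠ [] := by
  have h3 := hc.three_le_length
  intro h
  rw [← SimpleGraph.Walk.length_edges, h] at h3
  simp at h3

lemma exists_spanning_tree_aux [Fintype V] :
    ∀ (n : ℕ) (G : SimpleGraph V), G.Connected → G.edgeSet.ncard = n →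
      ∃ T ≤ G, T.IsTree := by
  intro n
  induction n using Nat.strong_induction_on with
  | _ n ih =>
    intro G hG hcard
    by_cases ha : G.IsAcyclic
    · exact ⟨G, le_refl _, ⟨hG, ha⟩⟩
    · rw [SimpleGraph.IsAcyclic] at ha
      push_neg at ha
      obtain ⟨v, c, hc⟩ := ha
      obtain ⟨e, he⟩ := List.exists_mem_of_ne_nil _ (cycle_edges_ne_nil hc)
      have heG : e ∈ G.edgeSet := c.edges_subset_edgeSet he
      have hconn' := connected_delete_cycle_edge hG hc he
      have hlt : (G \ SimpleGraph.fromEdgeSet {e}).edgeSet.ncard < n := by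
        rw [edgeSet_delete_edge, ← hcard]
        exact Set.ncard_diff_singleton_lt_of_mem heG (Set.toFinite _)
      obtain ⟨T, hT1, hT2⟩ := ih _ hlt _ hconn' rfl
      exact ⟨T, hT1.trans sdiff_le, hT2⟩

lemma exists_spanning_tree [Fintype V] (G : SimpleGraph V) (hG : G.Connected) :
    ∃ T ≤ G, T.IsTree :=
  exists_spanning_tree_aux G.edgeSet.ncard G hG rfl

lemma card_edgeFinset_eq_ncard (G : SimpleGraph V) [Fintype G.edgeSet] :
    G.edgeFinset.card = G.edgeSet.ncard := (Set.ncard_eq_toFinset_card' _).symm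

lemma tree_ncard [Fintype V] {T : SimpleGraph V} (hT : T.IsTree) :
    T.edgeSet.ncard + 1 = Fintype.card V := by
  rw [← card_edgeFinset_eq_ncard]
  exact hT.card_edgeFinset

lemma isTree_of_connected_of_ncard [Fintype V] {G : SimpleGraph V} (hG : G.Connected)
    (hcard : G.edgeSet.ncard + 1 = Fintype.card V) : G.IsTree := by
  by_contra h
  have ha : ¬ G.IsAcyclic := fun h' => h ⟨hG, h'⟩
  rw [SimpleGraph.IsAcyclic] at ha
  push_neg at ha
  obtain ⟨v, c, hc⟩ := ha
  obtain ⟨e, he⟩ := List.exists_mem_of_ne_nil _ (cycle_edges_ne_nil hc)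
  have heG : e ∈ G.edgeSet := c.edges_subset_edgeSet he
  have hconn' := connected_delete_cycle_edge hG hc he
  obtain ⟨T, hT1, hT2⟩ := exists_spanning_tree _ hconn'
  have hTcard := tree_ncard hT2
  have hsub : T.edgeSet ⊆ (G \ SimpleGraph.fromEdgeSet {e}).edgeSet :=
    SimpleGraph.edgeSet_mono hT1
  have hle := Set.ncard_le_ncard hsub (Set.toFinite _)
  rw [edgeSet_delete_edge] at hle
  have hlt := Set.ncard_diff_singleton_lt_of_mem heG (Set.toFinite _)
  omega

lemma edges_mapLe {G G' : SimpleGraph V} (h : G ≤ G') {u v : V} (p : G.Walk u v) :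
    (p.mapLe h).edges = p.edges := by
  rw [SimpleGraph.Walk.mapLe, SimpleGraph.Walk.edges_map]
  have h1 : ⇑(SimpleGraph.Hom.ofLE h) = id := rfl
  rw [h1, Sym2.map_id, List.map_id]

lemma exchange [Fintype V] {g T : SimpleGraph V} (hTg : T ≤ g) (hT : T.IsTree)
    {a b : V} (hab : g.Adj a b) (hnT : s(a, b) ∉ T.edgeSet)
    {P : T.Walk a b} (hP : P.IsPath) {f : Sym2 V} (hf : f ∈ P.edges) :
    ∃ T' : SimpleGraph V, T' ≤ g ∧ T'.IsTree ∧
      T'.edgeSet = insert s(a, b) (T.edgeSet \ {f}) := by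
  have hfT : f ∈ T.edgeSet := P.edges_subset_edgeSet hf
  have hfl : f ≠ s(a, b) := fun h => hnT (h ▸ hfT)
  set G₀ := T ⊔ SimpleGraph.fromEdgeSet {s(a, b)} with hG₀
  have hT0 : T ≤ G₀ := le_sup_left
  have hQP : (P.mapLe hT0).IsPath := hP.mapLe (h := hT0)
  have hadj : G₀.Adj b a := by
    refine (SimpleGraph.sup_adj _ _ _ _).2 (Or.inr ?_)
    rw [SimpleGraph.fromEdgeSet_adj]
    exact ⟨by rw [Sym2.eq_swap]; exact rfl, hab.ne.symm⟩
  have hnotmem : s(b, a) ∉ (P.mapLe hT0).edges := by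
    rw [edges_mapLe, Sym2.eq_swap]
    exact fun hmem => hnT (P.edges_subset_edgeSet hmem)
  have hC : (SimpleGraph.Walk.cons hadj (P.mapLe hT0)).IsCycle :=
    SimpleGraph.Path.cons_isCycle ⟨P.mapLe hT0, hQP⟩ hadj hnotmem
  have hfC : f ∈ (SimpleGraph.Walk.cons hadj (P.mapLe hT0)).edges := by
    rw [SimpleGraph.Walk.edges_cons, edges_mapLe]
    exact List.mem_cons_of_mem _ hf
  have hG₀conn : G₀.Connected := hT.isConnected.mono hT0
  have hconn' : (G₀ \ SimpleGraph.fromEdgeSet {f}).Connected :=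
    connected_delete_cycle_edge hG₀conn hC hfC
  have hES : (G₀ \ SimpleGraph.fromEdgeSet {f}).edgeSet = insert s(a, b) (T.edgeSet \ {f}) := by
    rw [edgeSet_delete_edge, hG₀, SimpleGraph.edgeSet_sup,
      SimpleGraph.edgeSet_fromEdgeSet]
    ext x
    simp only [Set.mem_diff, Set.mem_union, Set.mem_insert_iff, Set.mem_singleton_iff,
      Set.mem_setOf_eq]
    constructor
    · rintro ⟨h1 | ⟨h1, _⟩, h2⟩
      · exact Or.inr ⟨h1, h2⟩
      · exact Or.inl h1
    · rintro (rfl | ⟨h1, h2⟩)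
      · refine ⟨Or.inr ⟨rfl, ?_⟩, fun hh => hfl hh.symm⟩
        simpa using hab.ne
      · exact ⟨Or.inl h1, h2⟩
  refine ⟨G₀ \ SimpleGraph.fromEdgeSet {f}, ?_, ?_, hES⟩
  · refine le_trans sdiff_le (sup_le hTg ?_)
    intro v w hvw
    rw [SimpleGraph.fromEdgeSet_adj, Set.mem_singleton_iff] at hvw
    obtain ⟨h1, h2⟩ := hvw
    rw [Sym2.eq_iff] at h1
    rcases h1 with ⟨rfl, rfl⟩ | ⟨rfl, rfl⟩
    · exact hab
    · exact hab.symm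
  · refine isTree_of_connected_of_ncard hconn' ?_
    have h1 : s(a, b) ∉ T.edgeSet \ {f} := fun h => hnT h.1
    have h3 := tree_ncard hT
    have h4 : 0 < T.edgeSet.ncard := (Set.ncard_pos (Set.toFinite _)).2 ⟨f, hfT⟩
    rw [hES, Set.ncard_insert_of_notMem h1 (Set.toFinite _),
      Set.ncard_diff_singleton_of_mem hfT]
    omega



lemma foldr_min_exists_le {s : Sym2 V → ℝ} {L : List (Sym2 V)} {a : ℝ}
    (h : (L.map s).foldr min 1 ≤ a) (ha : a < 1) : ∃ x ∈ L, s x ≤ a := by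
  induction L with
  | nil => simp at h; linarith
  | cons hd tl ih =>
    simp only [List.map_cons, List.foldr_cons, min_le_iff] at h
    rcases h with h | h
    · exact ⟨hd, List.mem_cons_self, h⟩
    · obtain ⟨x, hx, hx'⟩ := ih h
      exact ⟨x, List.mem_cons_of_mem _ hx, hx'⟩

lemma lt_foldr_min {s : Sym2 V → ℝ} {L : List (Sym2 V)} {a : ℝ}
    (h : a < (L.map s).foldr min 1) : ∀ x ∈ L, a < s x := by
  induction L with
  | nil => simp
  | cons hd tl ih =>
    simp only [List.map_cons, List.foldr_cons, lt_min_iff] at h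
    intro x hx
    rcases List.mem_cons.1 hx with rfl | hx
    · exact h.1
    · exact ih h.2 x hx

lemma foldr_min_mem_Icc {s : Sym2 V → ℝ} {L : List (Sym2 V)}
    (h : ∀ x ∈ L, s x ∈ Set.Icc (0 : ℝ) 1) : (L.map s).foldr min 1 ∈ Set.Icc (0 : ℝ) 1 := by
  induction L with
  | nil => simp
  | cons hd tl ih =>
    have h1 := h hd (List.mem_cons_self)
    have h2 := ih fun x hx => h x (List.mem_cons_of_mem _ hx)
    simp only [List.map_cons, List.foldr_cons]
    constructor
    · exact le_min h1.1 h2.1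
    · exact min_le_of_right_le h2.2

lemma foldr_min_congr {s s' : Sym2 V → ℝ} {L : List (Sym2 V)}
    (h : ∀ x ∈ L, s x = s' x) : (L.map s).foldr min 1 = (L.map s').foldr min 1 := by
  rw [List.map_congr_left h]

/-- The chosen path underlying `treeMin`. -/
noncomputable def tmPath {T : SimpleGraph V} (hT : T.IsTree) (e : Sym2 V) :
    T.Walk e.out.1 e.out.2 :=
  (hT.existsUnique_path e.out.1 e.out.2).exists.choose

lemma tmPath_isPath {T : SimpleGraph V} (hT : T.IsTree) (e : Sym2 V) :
    (tmPath hT e).IsPath :=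
  (hT.existsUnique_path e.out.1 e.out.2).exists.choose_spec

lemma treeMin_eq {T : SimpleGraph V} (hT : T.IsTree) (s : Sym2 V → ℝ) (e : Sym2 V) :
    treeMin T hT s e = ((tmPath hT e).edges.map s).foldr min 1 := rfl

lemma tmPath_edges_subset {T : SimpleGraph V} (hT : T.IsTree) (e : Sym2 V) :
    ∀ x ∈ (tmPath hT e).edges, x ∈ T.edgeSet :=
  fun _ hx => (tmPath hT e).edges_subset_edgeSet hx

lemma treeMin_congr {T : SimpleGraph V} (hT : T.IsTree) {s s' : Sym2 V → ℝ} (e : Sym2 V)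
    (h : ∀ x ∈ T.edgeSet, s x = s' x) : treeMin T hT s e = treeMin T hT s' e :=
  foldr_min_congr fun x hx => h x (tmPath_edges_subset hT e x hx)

lemma treeMin_mem_Icc {T : SimpleGraph V} (hT : T.IsTree) {s : Sym2 V → ℝ} (e : Sym2 V)
    (h : ∀ x ∈ T.edgeSet, s x ∈ Set.Icc (0 : ℝ) 1) : treeMin T hT s e ∈ Set.Icc (0 : ℝ) 1 :=
  foldr_min_mem_Icc fun x hx => h x (tmPath_edges_subset hT e x hx)

lemma out_spec (e : Sym2 V) : s(e.out.1, e.out.2) = e := by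
  conv_rhs => rw [← e.out_eq]

/-- The goodness property: tree `T` is the maximal spanning tree for weights `s`. -/
def Good [Fintype V] (g T : SimpleGraph V) (hT : T.IsTree) (s : Sym2 V → ℝ) : Prop :=
  ∀ ℓ ∈ g.edgeSet, ℓ ∉ T.edgeSet → s ℓ < treeMin T hT s ℓ

lemma exists_good [Fintype V] {g : SimpleGraph V} (hg : g.Connected) (s : Sym2 V → ℝ)
    (hinj : Function.Injective s) (hlt1 : ∀ e, s e < 1) :
    ∃ T : {T : SimpleGraph V // T ≤ g ∧ T.IsTree}, Good g T.1 T.2.2 s := by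
  have hne : Nonempty {T : SimpleGraph V // T ≤ g ∧ T.IsTree} := by
    obtain ⟨T, h1, h2⟩ := exists_spanning_tree g hg
    exact ⟨⟨T, h1, h2⟩⟩
  obtain ⟨T, -, hmax⟩ := Finset.exists_max_image Finset.univ
    (fun T : {T : SimpleGraph V // T ≤ g ∧ T.IsTree} =>
      ∑ e ∈ Finset.univ.filter (fun e => e ∈ T.1.edgeSet), s e)
    (Finset.univ_nonempty)
  refine ⟨T, fun ℓ hℓg hℓT => ?_⟩
  by_contra hcon
  push_neg at hcon
  -- extract an edge on the path with smaller weight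
  rw [treeMin_eq] at hcon
  obtain ⟨f, hfP, hfle⟩ := foldr_min_exists_le hcon (hlt1 ℓ)
  have hfT : f ∈ T.1.edgeSet := tmPath_edges_subset T.2.2 ℓ f hfP
  have hfℓ : f ≠ ℓ := fun h => hℓT (h ▸ hfT)
  have hflt : s f < s ℓ := lt_of_le_of_ne hfle (fun h => hfℓ (hinj h))
  have hadj : g.Adj ℓ.out.1 ℓ.out.2 := by
    rw [← SimpleGraph.mem_edgeSet, out_spec]; exact hℓg
  have hnT : s(ℓ.out.1, ℓ.out.2) ∉ T.1.edgeSet := by rw [out_spec]; exact hℓT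
  obtain ⟨T', hT'g, hT'tree, hT'E⟩ :=
    exchange T.2.1 T.2.2 hadj hnT (tmPath_isPath T.2.2 ℓ) hfP
  rw [out_spec] at hT'E
  -- the new tree has strictly bigger weight
  have key := hmax ⟨T', hT'g, hT'tree⟩ (Finset.mem_univ _)
  simp only at key
  have hfin : Finset.univ.filter (fun e => e ∈ T'.edgeSet)
      = insert ℓ ((Finset.univ.filter (fun e => e ∈ T.1.edgeSet)).erase f) := by
    ext x
    simp only [Finset.mem_filter, Finset.mem_univ, true_and, hT'E, Set.mem_insert_iff,
      Set.mem_diff, Set.mem_singleton_iff, Finset.mem_insert, Finset.mem_erase]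
    tauto
  rw [hfin, Finset.sum_insert (by simp [hℓT]),
    Finset.sum_erase_eq_sub (by simp [hfT])] at key
  linarith

lemma good_exchange_bigger [Fintype V] {g T T' : SimpleGraph V}
    (hT : T.IsTree) (hT' : T'.IsTree) (hT'g : T' ≤ g) {s : Sym2 V → ℝ}
    (hG : Good g T hT s) {e : Sym2 V} (he : e ∈ T'.edgeSet) (heT : e ∉ T.edgeSet) :
    ∃ f, f ∈ T.edgeSet ∧ f ∉ T'.edgeSet ∧ s e < s f := by
  have heg : e ∈ g.edgeSet := SimpleGraph.edgeSet_mono hT'g he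
  have hst := hG e heg heT
  rw [treeMin_eq] at hst
  have hall : ∀ x ∈ (tmPath hT e).edges, s e < s x := lt_foldr_min hst
  have hclaim : ∃ f ∈ (tmPath hT e).edges, f ∉ T'.edgeSet := by
    by_contra hcon
    push_neg at hcon
    have hadj : T'.Adj e.out.1 e.out.2 := by
      rw [← SimpleGraph.mem_edgeSet, out_spec]; exact he
    have hQ : ((tmPath hT e).transfer T' hcon).IsPath :=
      (tmPath_isPath hT e).transfer _
    have huniq := hT'.IsAcyclic.path_unique ⟨(tmPath hT e).transfer T' hcon, hQ⟩
      (SimpleGraph.Path.singleton hadj)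
    have hedges := congrArg SimpleGraph.Walk.edges (Subtype.ext_iff.1 huniq)
    simp only [SimpleGraph.Walk.edges_transfer, SimpleGraph.Path.singleton] at hedges
    have hmem : e ∈ (tmPath hT e).edges := by
      rw [hedges]
      simp [out_spec]
    exact heT (tmPath_edges_subset hT e e hmem)
  obtain ⟨f, hfP, hfT'⟩ := hclaim
  exact ⟨f, tmPath_edges_subset hT e f hfP, hfT', hall f hfP⟩

lemma good_unique [Fintype V] {g : SimpleGraph V} {s : Sym2 V → ℝ}
    {T T' : {T : SimpleGraph V // T ≤ g ∧ T.IsTree}}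
    (hGT : Good g T.1 T.2.2 s) (hGT' : Good g T'.1 T'.2.2 s) : T = T' := by
  by_contra hne
  have hEne : ¬ (T.1.edgeSet = T'.1.edgeSet) := by
    intro h
    exact hne (Subtype.ext (SimpleGraph.edgeSet_inj.1 h))
  set F := Finset.univ.filter (fun x : Sym2 V =>
    (x ∈ T.1.edgeSet ∧ x ∉ T'.1.edgeSet) ∨ (x ∈ T'.1.edgeSet ∧ x ∉ T.1.edgeSet)) with hF
  have hFne : F.Nonempty := by
    rw [Finset.nonempty_iff_ne_empty]
    intro h
    apply hEne
    ext x
    have hx : x ∉ F := h ▸ Finset.notMem_empty x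
    simp only [hF, Finset.mem_filter, Finset.mem_univ, true_and] at hx
    tauto
  obtain ⟨e, heF, hemax⟩ := Finset.exists_max_image F s hFne
  simp only [hF, Finset.mem_filter, Finset.mem_univ, true_and] at heF
  rcases heF with ⟨h1, h2⟩ | ⟨h1, h2⟩
  · obtain ⟨f, hf1, hf2, hf3⟩ := good_exchange_bigger T'.2.2 T.2.2 T.2.1 hGT' h1 h2
    have : f ∈ F := by
      simp only [hF, Finset.mem_filter, Finset.mem_univ, true_and]
      tauto
    linarith [hemax f this]
  · obtain ⟨f, hf1, hf2, hf3⟩ := good_exchange_bigger T.2.2 T'.2.2 T'.2.1 hGT h1 h2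
    have : f ∈ F := by
      simp only [hF, Finset.mem_filter, Finset.mem_univ, true_and]
      tauto
    linarith [hemax f this]



section MeasureLemmas

variable {ι : Type*} [Fintype ι]

lemma prob_restrict : IsProbabilityMeasure (volume.restrict (Set.Icc (0:ℝ) 1)) := by
  constructor
  rw [Measure.restrict_apply_univ, Real.volume_Icc]
  norm_num

lemma noAtoms_restrict : NullSingletonClass (volume.restrict (Set.Icc (0:ℝ) 1)) := by
  constructor
  intro x
  rw [Measure.restrict_apply (measurableSet_singleton x)]
  exact measure_mono_null Set.inter_subset_left (measure_singleton x)

lemma pi_single (ν : ι → Measure ℝ) [∀ i, IsProbabilityMeasure (ν i)] (i : ι) (S : Set ℝ) :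
    Measure.pi ν {x | x i ∈ S} = ν i S := by
  have h : {x : ι → ℝ | x i ∈ S}
      = Set.pi Set.univ (fun j => if j = i then S else Set.univ) := by
    ext x
    simp only [Set.mem_setOf_eq, Set.mem_pi, Set.mem_univ, true_implies]
    constructor
    · intro hx j
      by_cases hj : j = i
      · subst hj; simpa using hx
      · simp [hj]
    · intro hx
      have := hx i
      simpa using this
  rw [h, Measure.pi_pi]
  rw [Finset.prod_eq_single i (fun j _ hj => by simp [hj]) (by simp)]
  simp

lemma pi_diag_null (ν : ι → Measure ℝ) [∀ k, IsProbabilityMeasure (ν k)] [∀ k, NullSingletonClass (ν k)]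
    {i j : ι} (hij : i ≠ j) :
    Measure.pi ν {x | x i = x j} = 0 := by
  set p : ι → Prop := fun k => k = i with hp
  have hpj : ¬ p j := fun h => hij h.symm
  have MP := measurePreserving_piEquivPiSubtypeProd ν p
  set e := MeasurableEquiv.piEquivPiSubtypeProd (fun _ : ι => ℝ) p with he
  set B : Set (({k // p k} → ℝ) × ({k // ¬ p k} → ℝ)) :=
    {z | z.1 ⟨i, rfl⟩ = z.2 ⟨j, hpj⟩} with hB
  have hBmeas : MeasurableSet B := by
    apply measurableSet_eq_fun
    · exact (measurable_pi_apply _).comp measurable_fst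
    · exact (measurable_pi_apply _).comp measurable_snd
  have hpre : {x : ι → ℝ | x i = x j} = e ⁻¹' B := rfl
  rw [hpre, MP.measure_preimage hBmeas.nullMeasurableSet]
  rw [Measure.prod_apply hBmeas]
  have hzero : ∀ x : {k // p k} → ℝ,
      (Measure.pi fun k : {k // ¬ p k} => ν k.1) (Prod.mk x ⁻¹' B) = 0 := by
    intro x
    have hset : Prod.mk x ⁻¹' B = {y : {k // ¬ p k} → ℝ | y ⟨j, hpj⟩ ∈ ({x ⟨i, rfl⟩} : Set ℝ)} := by
      ext y
      simp [hB, eq_comm]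
    rw [hset, pi_single (fun k : {k // ¬ p k} => ν k.1) ⟨j, hpj⟩]
    exact measure_singleton _
  simp only [hzero]
  simp

end MeasureLemmas

section AE

variable {ι : Type*} [Fintype ι]

local notation "ν₀" => volume.restrict (Set.Icc (0:ℝ) 1)

lemma ae_coords_Icc :
    ∀ᵐ x ∂(Measure.pi fun _ : ι => ν₀), ∀ i, x i ∈ Set.Icc (0:ℝ) 1 := by
  haveI := prob_restrict
  rw [ae_all_iff]
  intro i
  rw [ae_iff]
  have : {x : ι → ℝ | ¬ x i ∈ Set.Icc (0:ℝ) 1} = {x : ι → ℝ | x i ∈ (Set.Icc (0:ℝ) 1)ᶜ} := rfl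
  rw [this, pi_single (fun _ : ι => ν₀) i]
  rw [Measure.restrict_apply (measurableSet_Icc.compl)]
  simp

lemma ae_coords_Ioo :
    ∀ᵐ x ∂(Measure.pi fun _ : ι => ν₀), ∀ i, x i ∈ Set.Ioo (0:ℝ) 1 := by
  haveI := prob_restrict
  rw [ae_all_iff]
  intro i
  rw [ae_iff]
  have : {x : ι → ℝ | ¬ x i ∈ Set.Ioo (0:ℝ) 1} = {x : ι → ℝ | x i ∈ (Set.Ioo (0:ℝ) 1)ᶜ} := rfl
  rw [this, pi_single (fun _ : ι => ν₀) i]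
  rw [Measure.restrict_apply (measurableSet_Ioo.compl)]
  refine measure_mono_null (fun x hx => ?_) ((Set.toFinite ({0, 1} : Set ℝ)).measure_zero volume)
  obtain ⟨hx1, hx2, hx3⟩ : ¬(0 < x ∧ x < 1) ∧ 0 ≤ x ∧ x ≤ 1 := by
    simpa [Set.mem_compl_iff, Set.mem_Ioo, Set.mem_Icc] using hx
  simp only [Set.mem_insert_iff, Set.mem_singleton_iff]
  rcases eq_or_lt_of_le hx2 with h | h
  · exact Or.inl h.symm
  · right
    rcases eq_or_lt_of_le hx3 with h' | h'
    · exact h'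
    · exact absurd ⟨h, h'⟩ hx1

lemma ae_injective :
    ∀ᵐ x ∂(Measure.pi fun _ : ι => ν₀), Function.Injective x := by
  haveI := prob_restrict
  haveI := noAtoms_restrict
  have key : ∀ᵐ x ∂(Measure.pi fun _ : ι => ν₀), ∀ i j : ι, i ≠ j → x i ≠ x j := by
    rw [ae_all_iff]
    intro i
    rw [ae_all_iff]
    intro j
    by_cases hij : i = j
    · subst hij
      exact Filter.Eventually.of_forall fun x h => absurd rfl h
    · rw [ae_iff]
      refine measure_mono_null (fun x hx => ?_) (pi_diag_null (fun _ : ι => ν₀) hij)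
      simp only [Set.mem_setOf_eq, Classical.not_imp, not_not] at hx
      exact hx.2
  filter_upwards [key] with x hx
  intro a b hab
  by_contra hne
  exact hx a b hne hab

end AE


section StepA

variable {V : Type*} [Fintype V] [DecidableEq V]

local notation "ν₀" => volume.restrict (Set.Icc (0:ℝ) 1)

lemma measurable_foldr_min {ι : Type*} (L : List ι) :
    Measurable fun s : ι → ℝ => (L.map s).foldr min 1 := by
  induction L with
  | nil => simpa using measurable_const
  | cons hd tl ih =>
    have h : (fun s : ι → ℝ => ((hd :: tl).map s).foldr min 1)
        = fun s : ι → ℝ => min (s hd) ((tl.map s).foldr min 1) := rfl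
    rw [h]
    exact Measurable.min (measurable_pi_apply hd) ih

lemma measurable_treeMin {T : SimpleGraph V} (hT : T.IsTree) (e : Sym2 V) :
    Measurable fun s : Sym2 V → ℝ => treeMin T hT s e :=
  measurable_foldr_min (tmPath hT e).edges

lemma measurable_prod_treeMin {T : SimpleGraph V} (hT : T.IsTree) (D : Finset (Sym2 V)) :
    Measurable fun s : Sym2 V → ℝ => ∏ ℓ ∈ D, treeMin T hT s ℓ :=
  Finset.measurable_prod _ fun ℓ _ => measurable_treeMin hT ℓ

lemma measurable_goodSet {T : SimpleGraph V} (hT : T.IsTree) (D : Finset (Sym2 V)) :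
    MeasurableSet {s : Sym2 V → ℝ | ∀ ℓ ∈ D, s ℓ < treeMin T hT s ℓ} := by
  have h : {s : Sym2 V → ℝ | ∀ ℓ ∈ D, s ℓ < treeMin T hT s ℓ}
      = ⋂ ℓ ∈ (D : Set (Sym2 V)), {s : Sym2 V → ℝ | s ℓ < treeMin T hT s ℓ} := by
    ext s; simp
  rw [h]
  exact MeasurableSet.biInter (D : Set (Sym2 V)).to_countable
    fun ℓ _ => measurableSet_lt (measurable_pi_apply ℓ) (measurable_treeMin hT ℓ)

lemma integrable_prod_treeMin {T : SimpleGraph V} (hT : T.IsTree) (D : Finset (Sym2 V)) :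
    Integrable (fun s : Sym2 V → ℝ => ∏ ℓ ∈ D, treeMin T hT s ℓ)
      (Measure.pi fun _ : Sym2 V => ν₀) := by
  haveI := prob_restrict
  refine Integrable.mono' (integrable_const (1:ℝ))
    (measurable_prod_treeMin hT D).aestronglyMeasurable ?_
  filter_upwards [ae_coords_Icc] with s hs
  have hmem : ∀ ℓ ∈ D, treeMin T hT s ℓ ∈ Set.Icc (0:ℝ) 1 :=
    fun ℓ _ => treeMin_mem_Icc hT ℓ (fun x _ => hs x)
  rw [Real.norm_eq_abs, abs_le]
  constructor
  · have h := Finset.prod_nonneg fun ℓ hℓ => (hmem ℓ hℓ).1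
    linarith
  · exact Finset.prod_le_one (fun ℓ hℓ => (hmem ℓ hℓ).1) (fun ℓ hℓ => (hmem ℓ hℓ).2)

lemma integrable_indicator_goodSet {T : SimpleGraph V} (hT : T.IsTree) (D : Finset (Sym2 V)) :
    Integrable (Set.indicator {s : Sym2 V → ℝ | ∀ ℓ ∈ D, s ℓ < treeMin T hT s ℓ}
      (fun _ => (1:ℝ))) (Measure.pi fun _ : Sym2 V => ν₀) := by
  haveI := prob_restrict
  exact (integrable_const (1:ℝ)).indicator (measurable_goodSet hT D)

lemma nu_Iio {c : ℝ} (h0 : 0 ≤ c) (h1 : c ≤ 1) : ν₀ (Set.Iio c) = ENNReal.ofReal c := by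
  rw [Measure.restrict_apply measurableSet_Iio]
  have h : Set.Iio c ∩ Set.Icc 0 1 = Set.Ico 0 c := by
    ext x
    simp only [Set.mem_inter_iff, Set.mem_Iio, Set.mem_Icc, Set.mem_Ico]
    constructor
    · rintro ⟨hx1, hx2, _⟩; exact ⟨hx2, hx1⟩
    · rintro ⟨hx1, hx2⟩; exact ⟨hx2, hx1, le_trans (le_of_lt hx2) h1⟩
  rw [h, Real.volume_Ico]
  simp

lemma fubini_const_slice {α β γ : Type*} [MeasurableSpace α] [MeasurableSpace β]
    [MeasurableSpace γ] {μ : Measure α} {π₁ : Measure β} {π₂ : Measure γ}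
    [IsProbabilityMeasure π₁] [IsProbabilityMeasure π₂]
    (e : α ≃ᵐ β × γ) (MP : MeasurePreserving e μ (π₁.prod π₂))
    (f : α → ℝ) (hf : Integrable f μ) (g : γ → ℝ)
    (hfg : ∀ x y, f (e.symm (x, y)) = g y) :
    ∫ a, f a ∂μ = ∫ y, g y ∂π₂ := by
  have MPs := MeasurePreserving.symm _ MP
  have hint : Integrable (fun z : β × γ => f (e.symm z)) (π₁.prod π₂) :=
    (MeasurePreserving.integrable_comp_emb MPs e.symm.measurableEmbedding).2 hf
  rw [← MeasurePreserving.integral_comp' MPs f, integral_prod_symm _ hint]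
  refine integral_congr_ae (Filter.Eventually.of_forall fun y => ?_)
  simp only [hfg]
  simp

lemma fubini_indicator_slice {α β γ : Type*} [MeasurableSpace α] [MeasurableSpace β]
    [MeasurableSpace γ] {μ : Measure α} {π₁ : Measure β} {π₂ : Measure γ}
    [IsProbabilityMeasure π₁] [IsProbabilityMeasure π₂]
    (e : α ≃ᵐ β × γ) (MP : MeasurePreserving e μ (π₁.prod π₂))
    (f : α → ℝ) (hf : Integrable f μ) (B : γ → Set β)
    (hB : ∀ y, MeasurableSet (B y))
    (hfg : ∀ x y, f (e.symm (x, y)) = Set.indicator (B y) (fun _ => (1:ℝ)) x) :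
    ∫ a, f a ∂μ = ∫ y, (π₁ (B y)).toReal ∂π₂ := by
  have MPs := MeasurePreserving.symm _ MP
  have hint : Integrable (fun z : β × γ => f (e.symm z)) (π₁.prod π₂) :=
    (MeasurePreserving.integrable_comp_emb MPs e.symm.measurableEmbedding).2 hf
  rw [← MeasurePreserving.integral_comp' MPs f, integral_prod_symm _ hint]
  refine integral_congr_ae (Filter.Eventually.of_forall fun y => ?_)
  simp only [hfg]
  rw [integral_indicator_const (1:ℝ) (hB y)]
  simp
  rfl

lemma stepA {T : SimpleGraph V} (hT : T.IsTree)
    (D : Finset (Sym2 V)) (hD : ∀ x ∈ T.edgeSet, x ∉ D) :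
    ∫ s : Sym2 V → ℝ, (∏ ℓ ∈ D, treeMin T hT s ℓ) ∂(Measure.pi fun _ : Sym2 V => ν₀)
      = ∫ s : Sym2 V → ℝ,
          Set.indicator {u : Sym2 V → ℝ | ∀ ℓ ∈ D, u ℓ < treeMin T hT u ℓ} (fun _ => (1:ℝ)) s
          ∂(Measure.pi fun _ : Sym2 V => ν₀) := by
  haveI := prob_restrict
  set p : Sym2 V → Prop := fun x => x ∈ D with hp
  letI iF : Fintype (Subtype p) := Subtype.fintype p
  have MP := measurePreserving_piEquivPiSubtypeProd (fun _ : Sym2 V => ν₀) p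
  set e := MeasurableEquiv.piEquivPiSubtypeProd (fun _ : Sym2 V => ℝ) p with he
  set ext0 : ({x // ¬ p x} → ℝ) → (Sym2 V → ℝ) :=
    fun y i => if h : p i then 0 else y ⟨i, h⟩ with hext0
  have hsymm_apply : ∀ (x : Subtype p → ℝ) (y : {x // ¬ p x} → ℝ) (i : Sym2 V),
      e.symm (x, y) i = if h : p i then x ⟨i, h⟩ else y ⟨i, h⟩ := by
    intro x y i
    rfl
  have htm : ∀ (x : Subtype p → ℝ) (y : {x // ¬ p x} → ℝ) (ℓ : Sym2 V),
      treeMin T hT (e.symm (x, y)) ℓ = treeMin T hT (ext0 y) ℓ := by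
    intro x y ℓ
    refine treeMin_congr hT ℓ fun z hz => ?_
    have hzD : ¬ p z := hD z hz
    rw [hsymm_apply, dif_neg hzD, hext0]
    simp [dif_neg hzD]
  have hIcc : ∀ y : {x // ¬ p x} → ℝ, (∀ i, y i ∈ Set.Icc (0:ℝ) 1) →
      ∀ ℓ : Sym2 V, treeMin T hT (ext0 y) ℓ ∈ Set.Icc (0:ℝ) 1 := by
    intro y hy ℓ
    refine treeMin_mem_Icc hT ℓ fun z hz => ?_
    have hzD : ¬ p z := hD z hz
    rw [hext0]
    simpa [dif_neg hzD] using hy ⟨z, hzD⟩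
  have hL := fubini_const_slice e MP
    (fun s => ∏ ℓ ∈ D, treeMin T hT s ℓ) (integrable_prod_treeMin hT D)
    (fun y => ∏ ℓ ∈ D, treeMin T hT (ext0 y) ℓ)
    (fun x y => Finset.prod_congr rfl fun ℓ _ => htm x y ℓ)
  have hR := fubini_indicator_slice e MP
    (Set.indicator {u : Sym2 V → ℝ | ∀ ℓ ∈ D, u ℓ < treeMin T hT u ℓ} (fun _ => (1:ℝ)))
    (integrable_indicator_goodSet hT D)
    (fun y => Set.pi Set.univ fun j : Subtype p => Set.Iio (treeMin T hT (ext0 y) j.1))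
    (fun y => MeasurableSet.univ_pi fun j => measurableSet_Iio)
    (by
      intro x y
      simp only [Set.indicator_apply]
      congr 1
      simp only [Set.mem_setOf_eq, Set.mem_pi, Set.mem_univ, true_implies, Set.mem_Iio,
        eq_iff_iff]
      constructor
      · intro h j
        have h1 := h j.1 j.2
        rw [hsymm_apply, dif_pos j.2] at h1
        rw [← htm x y j.1]
        exact h1
      · intro h ℓ hℓ
        have h1 := h ⟨ℓ, hℓ⟩
        rw [hsymm_apply, dif_pos hℓ]
        rw [htm x y ℓ]
        exact h1)
  rw [hL, hR]
  refine integral_congr_ae ?_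
  filter_upwards [ae_coords_Icc (ι := {x // ¬ p x})] with y hy
  have hIy := hIcc y hy
  rw [Measure.pi_pi]
  have hnu : ∀ j : Subtype p, ν₀ (Set.Iio (treeMin T hT (ext0 y) j.1))
      = ENNReal.ofReal (treeMin T hT (ext0 y) j.1) :=
    fun j => nu_Iio (hIy j.1).1 (hIy j.1).2
  simp only [hnu]
  rw [← ENNReal.ofReal_prod_of_nonneg (fun j _ => (hIy _).1)]
  rw [ENNReal.toReal_ofReal (Finset.prod_nonneg fun j _ => (hIy _).1)]
  exact Finset.prod_subtype (p := p) D (fun x => Iff.rfl)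
    (fun ℓ => treeMin T hT (ext0 y) ℓ)

end StepA

end BKAux

/-- Brydges–Kennedy/AR partition of unity: for a finite connected graph `g`, the sum over
spanning trees `T` of `g` of the integral over `s ∈ [0,1]^{E}` of
`∏_{ℓ ∈ E(g) ∖ E(T)} s^T(ℓ)` equals `1`. -/
theorem spanning_tree_partition_of_unity {V : Type*} [Fintype V] [DecidableEq V]
    (g : SimpleGraph V) (hg : g.Connected) :
    ∑ T : {T : SimpleGraph V // T ≤ g ∧ T.IsTree},
        ∫ s : Sym2 V → ℝ,
          (∏ e ∈ g.edgeFinset \ (T : SimpleGraph V).edgeFinset,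
            treeMin (T : SimpleGraph V) T.2.2 s e)
          ∂(Measure.pi fun _ : Sym2 V => volume.restrict (Set.Icc (0 : ℝ) 1)) = 1 := by
  haveI := BKAux.prob_restrict
  have hstep : ∀ T : {T : SimpleGraph V // T ≤ g ∧ T.IsTree},
      (∫ s : Sym2 V → ℝ,
          (∏ e ∈ g.edgeFinset \ (T : SimpleGraph V).edgeFinset,
            treeMin (T : SimpleGraph V) T.2.2 s e)
          ∂(Measure.pi fun _ : Sym2 V => volume.restrict (Set.Icc (0 : ℝ) 1)))
        = ∫ s : Sym2 V → ℝ,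
          Set.indicator {u : Sym2 V → ℝ | ∀ ℓ ∈ g.edgeFinset \ (T : SimpleGraph V).edgeFinset,
              u ℓ < treeMin (T : SimpleGraph V) T.2.2 u ℓ} (fun _ => (1:ℝ)) s
          ∂(Measure.pi fun _ : Sym2 V => volume.restrict (Set.Icc (0 : ℝ) 1)) := by
    intro T
    refine BKAux.stepA T.2.2 _ ?_
    intro x hx
    simp only [Finset.mem_sdiff, SimpleGraph.mem_edgeFinset]
    tauto
  simp only [hstep]
  rw [← integral_finset_sum Finset.univ
    (fun (T : {T : SimpleGraph V // T ≤ g ∧ T.IsTree}) _ =>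
      BKAux.integrable_indicator_goodSet T.2.2 (g.edgeFinset \ (T : SimpleGraph V).edgeFinset))]
  have hone : ∀ᵐ s ∂(Measure.pi fun _ : Sym2 V => volume.restrict (Set.Icc (0 : ℝ) 1)),
      (∑ T : {T : SimpleGraph V // T ≤ g ∧ T.IsTree},
        Set.indicator {u : Sym2 V → ℝ | ∀ ℓ ∈ g.edgeFinset \ (T : SimpleGraph V).edgeFinset,
            u ℓ < treeMin (T : SimpleGraph V) T.2.2 u ℓ} (fun _ => (1:ℝ)) s) = (1:ℝ) := by
    filter_upwards [BKAux.ae_coords_Ioo, BKAux.ae_injective] with s hioo hinj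
    obtain ⟨T₀, hT₀⟩ := BKAux.exists_good hg s hinj (fun e => (hioo e).2)
    have hiff : ∀ T : {T : SimpleGraph V // T ≤ g ∧ T.IsTree},
        (∀ ℓ ∈ g.edgeFinset \ (T : SimpleGraph V).edgeFinset,
          s ℓ < treeMin (T : SimpleGraph V) T.2.2 s ℓ) ↔ BKAux.Good g T.1 T.2.2 s := by
      intro T
      constructor
      · intro h ℓ h1 h2
        exact h ℓ (by simp only [Finset.mem_sdiff, SimpleGraph.mem_edgeFinset]; exact ⟨h1, h2⟩)
      · intro h ℓ hℓ
        rw [Finset.mem_sdiff, SimpleGraph.mem_edgeFinset, SimpleGraph.mem_edgeFinset] at hℓ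
        exact h ℓ hℓ.1 hℓ.2
    rw [Finset.sum_eq_single_of_mem T₀ (Finset.mem_univ T₀)]
    · rw [Set.indicator_of_mem]
      exact (hiff T₀).2 hT₀
    · intro T _ hne
      rw [Set.indicator_of_notMem]
      intro hmem
      exact hne (BKAux.good_unique ((hiff T).1 hmem) hT₀)
  rw [integral_congr_ae hone]
  simp
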